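/- Let γ₁, γ₂ be two (not necessarily distinct) stationary or periodic orbits contained in ω(u), under the abstract axioms (A1)–(A5). Then there exists k ∈ ℤ such that W(p¹, p²) = k for all p¹ ∈ γ₁, p² ∈ γ₂ with p¹ ≠ p². In particular W(p¹,p²) is well-defined (i.e. (p¹,p²) ∉ Σ) for all such pairs. -/

import Mathlib

open Filter Topology Set

lemma aux_inj {X : Type*} (φ : ℝ → X → X) (hφ0 : ∀ x, φ 0 x = x)
    (hφadd : ∀ σ σ' x, φ (σ + σ') x = φ σ (φ σ' x)) (σ : ℝ) {x y : X}
    (h : φ σ x = φ σ y) : x = y := by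
  have := congrArg (φ (-σ)) h
  rwa [← hφadd, ← hφadd, neg_add_cancel, hφ0, hφ0] at this


lemma aux_per {X : Type*} (φ : ℝ → X → X) (hφ0 : ∀ x, φ 0 x = x)
    (hφadd : ∀ σ σ' x, φ (σ + σ') x = φ σ (φ σ' x)) {T : ℝ} {p : X}
    (hper : φ T p = p) : ∀ n : ℤ, φ (n * T) p = p := by
  have hneg : φ (-T) p = p := by
    conv_lhs => rw [← hper, ← hφadd, neg_add_cancel, hφ0]
  intro n
  induction n using Int.induction_on with
  | zero => simpa using hφ0 p
  | succ k ih =>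
      have h1 : (((k : ℤ) + 1 : ℤ) : ℝ) * T = T + ((k : ℤ) : ℝ) * T := by push_cast; ring
      rw [h1, hφadd, ih]; exact hper
  | pred k ih =>
      have h1 : ((-(k : ℤ) - 1 : ℤ) : ℝ) * T = -T + ((-(k : ℤ) : ℤ) : ℝ) * T := by
        push_cast; ring
      rw [h1, hφadd, ih]; exact hneg


lemma aux_const {X : Type*} [TopologicalSpace X] (S : Set (X × X)) (hScl : IsClosed S) (W : X → X → ℤ)
    (hWc : ContinuousOn (fun q : X × X => W q.1 q.2) Sᶜ)
    (g : ℝ → X × X) (hg : Continuous g) {a b : ℝ} (hab : a ≤ b)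
    (h : ∀ σ ∈ Icc a b, g σ ∉ S) :
    W (g a).1 (g a).2 = W (g b).1 (g b).2 := by
  have hmaps : MapsTo g (Icc a b) Sᶜ := fun σ hσ => h σ hσ
  have hcont : ContinuousOn (fun σ => W (g σ).1 (g σ).2) (Icc a b) :=
    hWc.comp hg.continuousOn hmaps
  have hpre : IsPreconnected ((fun σ => W (g σ).1 (g σ).2) '' Icc a b) :=
    (isPreconnected_Icc).image _ hcont
  have hsub : ((fun σ => W (g σ).1 (g σ).2) '' Icc a b).Subsingleton :=
    hpre.subsingleton
  exact hsub (mem_image_of_mem _ (left_mem_Icc.2 hab))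
    (mem_image_of_mem _ (right_mem_Icc.2 hab))


lemma aux_R {T₁ T₂ : ℝ} (hT₁ : 0 < T₁) (hT₂ : 0 < T₂) (ε M : ℝ) (hε : 0 < ε) :
    ∃ N l : ℤ, M ≤ N * T₁ ∧ |N * T₁ - l * T₂| < ε := by
  rcases AddSubgroup.dense_or_cyclic (AddSubgroup.closure ({T₁, T₂} : Set ℝ)) with hd | ⟨b, hb⟩
  · -- dense case
    have hε'0 : 0 < min ε T₂ := lt_min hε hT₂
    obtain ⟨g, hgH, hg0, hgε⟩ : ∃ g ∈ AddSubgroup.closure ({T₁, T₂} : Set ℝ),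
        0 < g ∧ g < min ε T₂ := by
      obtain ⟨g, hg1, hg2⟩ := hd.exists_between hε'0
      exact ⟨g, hg1, hg2.1, hg2.2⟩
    obtain ⟨k, l₀, hkl⟩ := AddSubgroup.mem_closure_pair.1 hgH
    rw [zsmul_eq_mul, zsmul_eq_mul] at hkl
    have hgT₂ : g < T₂ := lt_of_lt_of_le hgε (min_le_right _ _)
    have hgε' : g < ε := lt_of_lt_of_le hgε (min_le_left _ _)
    have hk0 : k ≠ 0 := by
      rintro rfl
      simp only [Int.cast_zero, zero_mul, zero_add] at hkl
      have hl₀pos : 0 < l₀ := by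
        by_contra h
        push_neg at h
        have : (l₀ : ℝ) * T₂ ≤ 0 :=
          mul_nonpos_of_nonpos_of_nonneg (by exact_mod_cast h) hT₂.le
        linarith [hkl ▸ hg0]
      have : (1 : ℝ) ≤ (l₀ : ℝ) := by exact_mod_cast hl₀pos
      nlinarith
    have hkT : (k : ℝ) * T₁ = g - l₀ * T₂ := by linarith
    -- choose m : ℤ with m ≥ 1 and m*T₁ ≥ M
    obtain ⟨m₀, hm₀⟩ := exists_nat_ge (max (M / T₁) 1)
    obtain ⟨m, hmdef⟩ : ∃ m : ℤ, (m : ℝ) = (m₀ : ℝ) := ⟨(m₀ : ℤ), by push_cast; ring⟩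
    have hm1 : (1 : ℝ) ≤ (m : ℝ) := by rw [hmdef]; exact le_trans (le_max_right _ _) hm₀
    have hmT₁ : M ≤ (m : ℝ) * T₁ := by
      have h1 : M / T₁ ≤ (m : ℝ) := by rw [hmdef]; exact le_trans (le_max_left _ _) hm₀
      calc M = (M / T₁) * T₁ := by field_simp
        _ ≤ (m : ℝ) * T₁ := by nlinarith
    clear hmdef hm₀
    set j : ℤ := ⌈(m : ℝ) * T₂ / g⌉ with hj
    have hjge : (m : ℝ) * T₂ / g ≤ (j : ℝ) := Int.le_ceil _
    have hjg_ge : (m : ℝ) * T₂ ≤ (j : ℝ) * g := by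
      rw [div_le_iff₀ hg0] at hjge; linarith
    have hdg : (m : ℝ) * T₂ / g * g = (m : ℝ) * T₂ := div_mul_cancel₀ _ (ne_of_gt hg0)
    have hjg_lt : (j : ℝ) * g < (m : ℝ) * T₂ + g := by
      have h2 : (j : ℝ) < (m : ℝ) * T₂ / g + 1 := Int.ceil_lt_add_one _
      nlinarith [mul_lt_mul_of_pos_right h2 hg0]
    have hjm : (m : ℝ) ≤ (j : ℝ) := by nlinarith
    have hj1 : (1 : ℝ) ≤ (j : ℝ) := le_trans hm1 hjm
    have hdiff : |(j : ℝ) * g - (m : ℝ) * T₂| < ε := by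
      rw [abs_lt]; constructor <;> nlinarith
    have hk1 : (1 : ℝ) ≤ |(k : ℝ)| := by
      have := Int.one_le_abs hk0
      calc (1:ℝ) ≤ ((|k| : ℤ) : ℝ) := by exact_mod_cast this
        _ = |(k : ℝ)| := by push_cast; ring
    refine ⟨j * |k|, if 0 < k then m - j * l₀ else j * l₀ - m, ?_, ?_⟩
    · push_cast
      have h1 : (m : ℝ) ≤ (j : ℝ) * |(k : ℝ)| := by nlinarith
      nlinarith
    · rcases lt_or_gt_of_ne hk0 with hkneg | hkpos
      · rw [if_neg (not_lt.2 hkneg.le)]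
        push_cast
        have habs : |(k : ℝ)| = -(k : ℝ) := by
          rw [abs_of_neg]; exact_mod_cast hkneg
        rw [habs]
        have heq : (j : ℝ) * -(k : ℝ) * T₁ - ((j : ℝ) * l₀ - (m : ℝ)) * T₂
            = -((j : ℝ) * g - (m : ℝ) * T₂) := by linear_combination (-(j : ℝ)) * hkT
        rw [heq, abs_neg]
        exact hdiff
      · rw [if_pos hkpos]
        push_cast
        have habs : |(k : ℝ)| = (k : ℝ) := by
          rw [abs_of_pos]; exact_mod_cast hkpos
        rw [habs]
        have heq : (j : ℝ) * (k : ℝ) * T₁ - ((m : ℝ) - (j : ℝ) * l₀) * T₂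
            = (j : ℝ) * g - (m : ℝ) * T₂ := by linear_combination (j : ℝ) * hkT
        rw [heq]
        exact hdiff
  · -- cyclic case
    have hmem : ∀ x ∈ ({T₁, T₂} : Set ℝ), ∃ n : ℤ, n • b = x := by
      intro x hx
      have : x ∈ AddSubgroup.closure ({T₁, T₂} : Set ℝ) := AddSubgroup.subset_closure hx
      rw [hb] at this
      exact AddSubgroup.mem_closure_singleton.1 this
    obtain ⟨m₁, hm₁⟩ := hmem T₁ (by simp)
    obtain ⟨m₂, hm₂⟩ := hmem T₂ (by simp)
    rw [zsmul_eq_mul] at hm₁ hm₂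
    have hm₂0 : m₂ ≠ 0 := by rintro rfl; simp at hm₂; linarith
    have hceq : (m₂ : ℝ) * T₁ = (m₁ : ℝ) * T₂ := by
      rw [← hm₁, ← hm₂]; ring
    set c : ℝ := (m₂ : ℝ) * T₁ with hc
    have hc0 : c ≠ 0 := mul_ne_zero (by exact_mod_cast hm₂0) (ne_of_gt hT₁)
    have habs : 0 < |c| := abs_pos.2 hc0
    obtain ⟨t, ht⟩ := exists_nat_ge (M / |c|)
    have htc : M ≤ (t : ℝ) * |c| := by
      calc M = (M / |c|) * |c| := by field_simp
        _ ≤ (t : ℝ) * |c| := by nlinarith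
    set j : ℤ := if 0 < c then (t : ℤ) else -(t : ℤ) with hjdef
    have hjc : (j : ℝ) * c = (t : ℝ) * |c| := by
      rcases lt_or_gt_of_ne hc0 with h | h
      · rw [hjdef, if_neg (not_lt.2 h.le), abs_of_neg h]; push_cast; ring
      · rw [hjdef, if_pos h, abs_of_pos h]; push_cast; ring
    refine ⟨j * m₂, j * m₁, ?_, ?_⟩
    · push_cast
      calc M ≤ (t : ℝ) * |c| := htc
        _ = (j : ℝ) * c := hjc.symm
        _ = (j : ℝ) * (m₂ : ℝ) * T₁ := by rw [hc]; ring
    · push_cast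
      have heq : (j : ℝ) * (m₂ : ℝ) * T₁ - (j : ℝ) * (m₁ : ℝ) * T₂ = 0 := by
        linear_combination (j : ℝ) * hceq
      rw [heq, abs_zero]
      exact hε

lemma aux_mono {X : Type*} [TopologicalSpace X]
    (φ : ℝ → X → X)
    (hφc : Continuous fun p : ℝ × X => φ p.1 p.2)
    (hφ0 : ∀ x, φ 0 x = x)
    (hφadd : ∀ σ σ' x, φ (σ + σ') x = φ σ (φ σ' x))
    (S : Set (X × X)) (hScl : IsClosed S)
    (W : X → X → ℤ)
    (hWc : ContinuousOn (fun q : X × X => W q.1 q.2) Sᶜ)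
    (hA4 : ∀ u v : X, (u, v) ∈ S → u ≠ v →
      ∃ ε > (0 : ℝ), ∀ σ : ℝ, σ ≠ 0 → |σ| < ε → (φ σ u, φ σ v) ∉ S)
    (hA5 : ∀ u v : X, (u, v) ∈ S → u ≠ v →
      ∃ ε > (0 : ℝ), ∀ σ σ' : ℝ, -ε < σ → σ < 0 → 0 < σ' → σ' < ε →
        W (φ σ' u) (φ σ' v) < W (φ σ u) (φ σ v))
    (q₁ q₂ : X) (hq : q₁ ≠ q₂) {a b : ℝ} (hab : a ≤ b)
    (hSa : (φ a q₁, φ a q₂) ∉ S) (hSb : (φ b q₁, φ b q₂) ∉ S) :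
    W (φ b q₁) (φ b q₂) ≤ W (φ a q₁) (φ a q₂) := by
  have hflow : ∀ x : X, Continuous fun σ : ℝ => φ σ x := fun x =>
    hφc.comp (continuous_id.prodMk continuous_const)
  set c : ℝ → X × X := fun σ => (φ σ q₁, φ σ q₂) with hcdef
  have hc : Continuous c := (hflow q₁).prodMk (hflow q₂)
  set f : ℝ → ℤ := fun σ => W (φ σ q₁) (φ σ q₂) with hfdef
  have hneq : ∀ σ, φ σ q₁ ≠ φ σ q₂ := fun σ h => hq (aux_inj φ hφ0 hφadd σ h)
  have hshift : ∀ (τ σ₀ : ℝ) (x : X), φ (τ - σ₀) (φ σ₀ x) = φ τ x := by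
    intro τ σ₀ x
    rw [← hφadd, sub_add_cancel]
  -- L1 : local constancy off S
  have hL1 : ∀ σ₀, c σ₀ ∉ S → ∃ δ > (0:ℝ), ∀ τ, |τ - σ₀| < δ → c τ ∉ S ∧ f τ = f σ₀ := by
    intro σ₀ h0
    have hUopen : IsOpen (c ⁻¹' Sᶜ) := hScl.isOpen_compl.preimage hc
    have hmem : σ₀ ∈ c ⁻¹' Sᶜ := h0
    have hfc : ContinuousAt (fun σ => W (c σ).1 (c σ).2) σ₀ :=
      (hWc.comp hc.continuousOn (fun x hx => hx)).continuousAt (hUopen.mem_nhds hmem)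
    have hsing : {W (c σ₀).1 (c σ₀).2} ∈ 𝓝 (W (c σ₀).1 (c σ₀).2) :=
      (isOpen_discrete _).mem_nhds rfl
    have hev : (fun σ => W (c σ).1 (c σ).2) ⁻¹' {W (c σ₀).1 (c σ₀).2} ∈ 𝓝 σ₀ := hfc hsing
    have hcomb : ((fun σ => W (c σ).1 (c σ).2) ⁻¹' {W (c σ₀).1 (c σ₀).2} ∩ c ⁻¹' Sᶜ) ∈ 𝓝 σ₀ :=
      Filter.inter_mem hev (hUopen.mem_nhds hmem)
    obtain ⟨δ, hδ, hball⟩ := Metric.mem_nhds_iff.1 hcomb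
    refine ⟨δ, hδ, fun τ hτ => ?_⟩
    have : τ ∈ Metric.ball σ₀ δ := by
      rw [Metric.mem_ball, Real.dist_eq]; exact hτ
    have h2 := hball this
    exact ⟨h2.2, h2.1⟩
  -- L2 : isolated crossing with strict drop
  have hL2 : ∀ σ₀, c σ₀ ∈ S → ∃ δ > (0:ℝ), (∀ τ, τ ≠ σ₀ → |τ - σ₀| < δ → c τ ∉ S) ∧
      ∀ τ τ', σ₀ - δ < τ → τ < σ₀ → σ₀ < τ' → τ' < σ₀ + δ → f τ' < f τ := by
    intro σ₀ h0
    obtain ⟨ε₄, hε₄, h4⟩ := hA4 _ _ h0 (hneq σ₀)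
    obtain ⟨ε₅, hε₅, h5⟩ := hA5 _ _ h0 (hneq σ₀)
    refine ⟨min ε₄ ε₅, lt_min hε₄ hε₅, ?_, ?_⟩
    · intro τ hτne hτδ
      have h := h4 (τ - σ₀) (sub_ne_zero.2 hτne) (lt_of_lt_of_le hτδ (min_le_left _ _))
      rwa [hshift τ σ₀ q₁, hshift τ σ₀ q₂] at h
    · intro τ τ' h1 h2 h3 h4'
      have hmr := min_le_right ε₄ ε₅
      have h := h5 (τ - σ₀) (τ' - σ₀) (by linarith) (by linarith) (by linarith) (by linarith)
      rwa [hshift τ σ₀ q₁, hshift τ σ₀ q₂, hshift τ' σ₀ q₁, hshift τ' σ₀ q₂] at h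
  -- real induction
  set A : Set ℝ := {σ | σ ∈ Icc a b ∧ ∀ τ ∈ Icc a σ, c τ ∉ S → f τ ≤ f a} with hAdef
  have haA : a ∈ A := ⟨⟨le_refl a, hab⟩, fun τ hτ _ => by
    have : τ = a := le_antisymm hτ.2 hτ.1
    rw [this]⟩
  have hAne : A.Nonempty := ⟨a, haA⟩
  have hAbdd : BddAbove A := ⟨b, fun x hx => hx.1.2⟩
  set s := sSup A with hsdef
  have hsa : a ≤ s := le_csSup hAbdd haA
  have hsb : s ≤ b := csSup_le hAne (fun x hx => hx.1.2)
  have hQlt : ∀ τ, a ≤ τ → τ < s → c τ ∉ S → f τ ≤ f a := by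
    intro τ hτa hτs hτS
    obtain ⟨σ, hσA, hτσ⟩ := exists_lt_of_lt_csSup hAne hτs
    exact hσA.2 τ ⟨hτa, hτσ.le⟩ hτS
  have hQs : ∀ τ ∈ Icc a s, c τ ∉ S → f τ ≤ f a := by
    intro τ hτ hτS
    rcases lt_or_eq_of_le hτ.2 with h | h
    · exact hQlt τ hτ.1 h hτS
    · rcases eq_or_lt_of_le hτ.1 with h' | h'
      · rw [← h']
      · obtain ⟨δ, hδ, hδp⟩ := hL1 τ hτS
        set τ' := max a (τ - δ/2) with hτ'def
        have hτ'1 : a ≤ τ' := le_max_left _ _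
        have hτ'2 : τ' < τ := max_lt h' (by linarith)
        have hτ'4 : τ - δ/2 ≤ τ' := le_max_right _ _
        clear_value τ'
        have hτ'3 : |τ' - τ| < δ := by
          rw [abs_lt]
          constructor <;> linarith
        have h1 := hδp τ' hτ'3
        have h2 := hQlt τ' hτ'1 (lt_of_lt_of_le hτ'2 (le_of_eq h)) h1.1
        rw [← h1.2]
        exact h2
  have hsA : s ∈ A := ⟨⟨hsa, hsb⟩, hQs⟩
  have hseqb : s = b := by
    by_contra hne'
    have hsblt : s < b := lt_of_le_of_ne hsb hne'
    by_cases hcs : c s ∈ S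
    · have hsa' : a < s := by
        rcases eq_or_lt_of_le hsa with h' | h'
        · exfalso; rw [← h'] at hcs; exact hSa hcs
        · exact h'
      obtain ⟨δ, hδ, hpunc, hdrop⟩ := hL2 s hcs
      set δ' := min δ (min (s - a) (b - s)) with hδ'def
      have hδ'0 : 0 < δ' := lt_min hδ (lt_min (by linarith) (by linarith))
      have hd1 : δ' ≤ δ := min_le_left _ _
      have hd2 : δ' ≤ s - a := le_trans (min_le_right _ _) (min_le_left _ _)
      have hd3 : δ' ≤ b - s := le_trans (min_le_right _ _) (min_le_right _ _)
      clear_value δ'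
      set τm := s - δ'/2 with hτmdef
      clear_value τm
      have hτmS : c τm ∉ S := hpunc τm (ne_of_lt (by linarith))
        (by rw [abs_lt]; constructor <;> linarith)
      have hfτm : f τm ≤ f a := hQlt τm (by linarith) (by linarith) hτmS
      set σ' := s + δ'/2 with hσ'def
      clear_value σ'
      have hσ'A : σ' ∈ A := by
        refine ⟨⟨by linarith, by linarith⟩, ?_⟩
        intro τ hτ hτS
        rcases le_or_gt τ s with h | h
        · exact hQs τ ⟨hτ.1, h⟩ hτS
        · have hτb : τ ≤ σ' := hτ.2
          have : f τ < f τm := hdrop τm τ (by linarith) (by linarith) h (by linarith)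
          linarith
      have : σ' ≤ s := le_csSup hAbdd hσ'A
      linarith
    · obtain ⟨δ, hδ, hδp⟩ := hL1 s hcs
      set σ' := min b (s + δ/2) with hσ'def
      have hσ's : s < σ' := lt_min hsblt (by linarith)
      have hσ'b : σ' ≤ b := min_le_left _ _
      have hσ'le : σ' ≤ s + δ/2 := min_le_right _ _
      clear_value σ'
      have hfs : f s ≤ f a := hQs s ⟨hsa, le_refl s⟩ hcs
      have hσ'A : σ' ∈ A := by
        refine ⟨⟨le_trans hsa hσ's.le, hσ'b⟩, ?_⟩
        intro τ hτ hτS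
        rcases le_or_gt τ s with h | h
        · exact hQs τ ⟨hτ.1, h⟩ hτS
        · have hτσ' : τ ≤ s + δ/2 := le_trans hτ.2 hσ'le
          have h1 := hδp τ (by rw [abs_lt]; constructor <;> linarith)
          rw [h1.2]
          exact hfs
      have : σ' ≤ s := le_csSup hAbdd hσ'A
      linarith
  have := hsA.2 b ⟨hab, by rw [hseqb]⟩ hSb
  exact this

lemma aux_notS {X : Type*} [TopologicalSpace X]
    (φ : ℝ → X → X)
    (hφc : Continuous fun p : ℝ × X => φ p.1 p.2)
    (hφ0 : ∀ x, φ 0 x = x)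
    (hφadd : ∀ σ σ' x, φ (σ + σ') x = φ σ (φ σ' x))
    (S : Set (X × X)) (hScl : IsClosed S)
    (W : X → X → ℤ)
    (hWc : ContinuousOn (fun q : X × X => W q.1 q.2) Sᶜ)
    (hA4 : ∀ u v : X, (u, v) ∈ S → u ≠ v →
      ∃ ε > (0 : ℝ), ∀ σ : ℝ, σ ≠ 0 → |σ| < ε → (φ σ u, φ σ v) ∉ S)
    (hA5 : ∀ u v : X, (u, v) ∈ S → u ≠ v →
      ∃ ε > (0 : ℝ), ∀ σ σ' : ℝ, -ε < σ → σ < 0 → 0 < σ' → σ' < ε →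
        W (φ σ' u) (φ σ' v) < W (φ σ u) (φ σ v))
    (p₁ p₂ : X) (T₁ T₂ : ℝ) (hT₁ : 0 < T₁) (hT₂ : 0 < T₂)
    (hper₁ : φ T₁ p₁ = p₁) (hper₂ : φ T₂ p₂ = p₂)
    (s t : ℝ) (hne : φ s p₁ ≠ φ t p₂) : (φ s p₁, φ t p₂) ∉ S := by
  set q₁ := φ s p₁ with hq₁def
  set q₂ := φ t p₂ with hq₂def
  have hq₁per : ∀ n : ℤ, φ ((n : ℝ) * T₁) q₁ = q₁ := by
    intro n
    rw [hq₁def, ← hφadd, add_comm, hφadd, aux_per φ hφ0 hφadd hper₁ n]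
  have hq₂per : ∀ n : ℤ, φ ((n : ℝ) * T₂) q₂ = q₂ := by
    intro n
    rw [hq₂def, ← hφadd, add_comm, hφadd, aux_per φ hφ0 hφadd hper₂ n]
  intro hS
  have hq : q₁ ≠ q₂ := hne
  obtain ⟨ε₄, hε₄, h4⟩ := hA4 q₁ q₂ hS hq
  obtain ⟨ε₅, hε₅, h5⟩ := hA5 q₁ q₂ hS hq
  set η := min ε₄ ε₅ / 2 with hηdef
  have hη0 : 0 < η := by rw [hηdef]; positivity
  have hηε₄ : η < ε₄ := by
    rw [hηdef]; have := min_le_left ε₄ ε₅; linarith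
  have hηε₅ : η < ε₅ := by
    rw [hηdef]; have := min_le_right ε₄ ε₅; linarith
  clear_value η
  -- the reference point off S
  have hz : (φ (-η) q₁, φ (-η) q₂) ∉ S :=
    h4 (-η) (by intro h; rw [neg_eq_zero] at h; exact (ne_of_gt hη0) h)
      (by rw [abs_neg, abs_of_pos hη0]; exact hηε₄)
  -- local constancy of W along δ ↦ (φ (-η) q₁, φ (-η+δ) q₂) at δ = 0
  set g : ℝ → X × X := fun δ => (φ (-η) q₁, φ (-η + δ) q₂) with hgdef
  have hg : Continuous g := by
    apply Continuous.prodMk continuous_const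
    exact hφc.comp ((continuous_const.add continuous_id).prodMk continuous_const)
  have hg0mem : (0:ℝ) ∈ g ⁻¹' Sᶜ := by
    simp only [hgdef, mem_preimage, add_zero, mem_compl_iff]
    exact hz
  have hUopen : IsOpen (g ⁻¹' Sᶜ) := hScl.isOpen_compl.preimage hg
  have hfc : ContinuousAt (fun δ => W (g δ).1 (g δ).2) 0 :=
    (hWc.comp hg.continuousOn (fun x hx => hx)).continuousAt (hUopen.mem_nhds hg0mem)
  have hsing : {W (g 0).1 (g 0).2} ∈ 𝓝 (W (g 0).1 (g 0).2) :=
    (isOpen_discrete _).mem_nhds rfl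
  have hcomb : ((fun δ => W (g δ).1 (g δ).2) ⁻¹' {W (g 0).1 (g 0).2} ∩ g ⁻¹' Sᶜ) ∈ 𝓝 (0:ℝ) :=
    Filter.inter_mem (hfc hsing) (hUopen.mem_nhds hg0mem)
  obtain ⟨ε', hε', hball⟩ := Metric.mem_nhds_iff.1 hcomb
  -- recurrence time
  obtain ⟨N, l, hNM, hNl⟩ := aux_R hT₁ hT₂ ε' (2*η + 1) hε'
  set L := (N : ℝ) * T₁ with hLdef
  set δ := L - (l : ℝ) * T₂ with hδdef
  have hδball : δ ∈ Metric.ball (0:ℝ) ε' := by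
    rw [Metric.mem_ball, Real.dist_eq, sub_zero]
    exact hNl
  have hδmem := hball hδball
  have e1 : φ (L - η) q₁ = φ (-η) q₁ := by
    rw [show L - η = -η + (N : ℝ) * T₁ by rw [hLdef]; ring, hφadd, hq₁per N]
  have e2 : φ (L - η) q₂ = φ (-η + δ) q₂ := by
    rw [show L - η = (-η + δ) + (l : ℝ) * T₂ by rw [hδdef]; ring, hφadd, hq₂per l]
  have hSη : (φ η q₁, φ η q₂) ∉ S :=
    h4 η (ne_of_gt hη0) (by rw [abs_of_pos hη0]; exact hηε₄)
  have hSL : (φ (L - η) q₁, φ (L - η) q₂) ∉ S := by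
    rw [e1, e2]
    exact hδmem.2
  have hab : η ≤ L - η := by
    have : 2*η + 1 ≤ L := hNM
    linarith
  have hmono := aux_mono φ hφc hφ0 hφadd S hScl W hWc hA4 hA5 q₁ q₂ hq hab hSη hSL
  have hdrop := h5 (-η) η (by linarith) (by linarith) hη0 hηε₅
  have heqW : W (φ (L - η) q₁) (φ (L - η) q₂) = W (φ (-η) q₁) (φ (-η) q₂) := by
    rw [e1, e2]
    have := hδmem.1
    simp only [mem_preimage, mem_singleton_iff, hgdef, add_zero] at this
    exact this
  omega


lemma aux_diag {X : Type*} [TopologicalSpace X]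
    (φ : ℝ → X → X)
    (hφc : Continuous fun p : ℝ × X => φ p.1 p.2)
    (hφ0 : ∀ x, φ 0 x = x)
    (hφadd : ∀ σ σ' x, φ (σ + σ') x = φ σ (φ σ' x))
    (S : Set (X × X)) (hScl : IsClosed S)
    (W : X → X → ℤ)
    (hWc : ContinuousOn (fun q : X × X => W q.1 q.2) Sᶜ)
    (hA4 : ∀ u v : X, (u, v) ∈ S → u ≠ v →
      ∃ ε > (0 : ℝ), ∀ σ : ℝ, σ ≠ 0 → |σ| < ε → (φ σ u, φ σ v) ∉ S)
    (hA5 : ∀ u v : X, (u, v) ∈ S → u ≠ v →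
      ∃ ε > (0 : ℝ), ∀ σ σ' : ℝ, -ε < σ → σ < 0 → 0 < σ' → σ' < ε →
        W (φ σ' u) (φ σ' v) < W (φ σ u) (φ σ v))
    (p₁ p₂ : X) (T₁ T₂ : ℝ) (hT₁ : 0 < T₁) (hT₂ : 0 < T₂)
    (hper₁ : φ T₁ p₁ = p₁) (hper₂ : φ T₂ p₂ = p₂)
    (s t σ : ℝ) (hne : φ s p₁ ≠ φ t p₂) :
    W (φ (s + σ) p₁) (φ (t + σ) p₂) = W (φ s p₁) (φ t p₂) := by
  set q₁ := φ s p₁ with hq₁def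
  set q₂ := φ t p₂ with hq₂def
  have key : ∀ τ : ℝ, (φ τ q₁, φ τ q₂) ∉ S := by
    intro τ
    rw [hq₁def, hq₂def, ← hφadd, ← hφadd]
    apply aux_notS φ hφc hφ0 hφadd S hScl W hWc hA4 hA5 p₁ p₂ T₁ T₂ hT₁ hT₂ hper₁ hper₂
    intro h
    rw [hφadd, hφadd] at h
    exact hne (aux_inj φ hφ0 hφadd τ h)
  have hflow : ∀ x : X, Continuous fun σ : ℝ => φ σ x := fun x =>
    hφc.comp (continuous_id.prodMk continuous_const)
  set g : ℝ → X × X := fun τ => (φ τ q₁, φ τ q₂) with hgdef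
  have hg : Continuous g := (hflow q₁).prodMk (hflow q₂)
  have e0 : g 0 = (q₁, q₂) := by simp only [hgdef, hφ0]
  have eσ : g σ = (φ (s + σ) p₁, φ (t + σ) p₂) := by
    simp only [hgdef, hq₁def, hq₂def, ← hφadd]
    rw [add_comm σ s, add_comm σ t]
  rcases le_total 0 σ with h | h
  · have := aux_const S hScl W hWc g hg h (fun τ _ => key τ)
    rw [e0, eσ] at this
    exact this.symm
  · have := aux_const S hScl W hWc g hg h (fun τ _ => key τ)
    rw [e0, eσ] at this
    exact this

/-- under axioms (A1)–(A5), for two (not necessarily distinct)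
stationary or periodic orbits γ₁, γ₂ ⊆ ω(u), there is k ∈ ℤ such that
(p¹,p²) ∉ Σ and W(p¹, p²) = k for all p¹ ∈ γ₁, p² ∈ γ₂ with p¹ ≠ p². -/
theorem stmt_14 {X : Type*} [TopologicalSpace X] [CompactSpace X] [T2Space X]
    (φ : ℝ → X → X)
    (hφc : Continuous fun p : ℝ × X => φ p.1 p.2)
    (hφ0 : ∀ x, φ 0 x = x)
    (hφadd : ∀ σ σ' x, φ (σ + σ') x = φ σ (φ σ' x))
    (S : Set (X × X)) (hScl : IsClosed S)
    (hΔS : ∀ x : X, (x, x) ∈ S)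
    (W : X → X → ℤ)
    -- (A1)
    (hWc : ContinuousOn (fun q : X × X => W q.1 q.2) Sᶜ)
    (hWsym : ∀ u v : X, (u, v) ∉ S → W u v = W v u)
    -- (A2), (A3)
    (π : X → ℝ × ℝ) (hπc : Continuous π)
    (hA3 : ∀ u v : X, π u = π v → (u, v) ∈ S)
    -- (A4)
    (hA4 : ∀ u v : X, (u, v) ∈ S → u ≠ v →
      ∃ ε > (0 : ℝ), ∀ σ : ℝ, σ ≠ 0 → |σ| < ε → (φ σ u, φ σ v) ∉ S)
    -- (A5)
    (hA5 : ∀ u v : X, (u, v) ∈ S → u ≠ v →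
      ∃ ε > (0 : ℝ), ∀ σ σ' : ℝ, -ε < σ → σ < 0 → 0 < σ' → σ' < ε →
        W (φ σ' u) (φ σ' v) < W (φ σ u) (φ σ v))
    (u p₁ p₂ : X) (T₁ T₂ : ℝ) (hT₁ : 0 < T₁) (hT₂ : 0 < T₂)
    (hper₁ : φ T₁ p₁ = p₁) (hper₂ : φ T₂ p₂ = p₂)
    (hγ₁ : {x : X | ∃ σ : ℝ, x = φ σ p₁} ⊆
      {w : X | ∃ σs : ℕ → ℝ, Tendsto σs atTop atTop ∧
        Tendsto (fun n => φ (σs n) u) atTop (nhds w)})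
    (hγ₂ : {x : X | ∃ σ : ℝ, x = φ σ p₂} ⊆
      {w : X | ∃ σs : ℕ → ℝ, Tendsto σs atTop atTop ∧
        Tendsto (fun n => φ (σs n) u) atTop (nhds w)}) :
    ∃ k : ℤ, ∀ q₁ ∈ {x : X | ∃ σ : ℝ, x = φ σ p₁},
      ∀ q₂ ∈ {x : X | ∃ σ : ℝ, x = φ σ p₂},
        q₁ ≠ q₂ → (q₁, q₂) ∉ S ∧ W q₁ q₂ = k := by
  classical
  have hflow : ∀ x : X, Continuous fun σ : ℝ => φ σ x := fun x =>
    hφc.comp (continuous_id.prodMk continuous_const)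
  by_cases hD : ∃ c : ℝ, φ c p₁ ≠ p₂
  swap
  · push_neg at hD
    refine ⟨0, ?_⟩
    rintro q₁ ⟨s, rfl⟩ q₂ ⟨t, rfl⟩ hne
    exfalso
    have h1 : p₂ = p₁ := by rw [← hD 0, hφ0]
    have h2 : ∀ c, φ c p₁ = p₁ := fun c => (hD c).trans h1
    exact hne (by rw [h2 s, h1, h2 t])
  obtain ⟨cstar, hcstar⟩ := hD
  have notS' : ∀ s t, φ s p₁ ≠ φ t p₂ → (φ s p₁, φ t p₂) ∉ S := fun s t h =>
    aux_notS φ hφc hφ0 hφadd S hScl W hWc hA4 hA5 p₁ p₂ T₁ T₂ hT₁ hT₂ hper₁ hper₂ s t h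
  have diag' : ∀ s t σ, φ s p₁ ≠ φ t p₂ →
      W (φ (s + σ) p₁) (φ (t + σ) p₂) = W (φ s p₁) (φ t p₂) := fun s t σ h =>
    aux_diag φ hφc hφ0 hφadd S hScl W hWc hA4 hA5 p₁ p₂ T₁ T₂ hT₁ hT₂ hper₁ hper₂ s t σ h
  have notS2 : ∀ c, φ c p₁ ≠ p₂ → (φ c p₁, p₂) ∉ S := by
    intro c h
    have := notS' c 0 (by rw [hφ0]; exact h)
    rwa [hφ0] at this
  have hgood : ∀ s t, φ s p₁ ≠ φ t p₂ → φ (s - t) p₁ ≠ p₂ := by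
    intro s t hne h
    apply hne
    have := congrArg (φ t) h
    rw [← hφadd, show t + (s - t) = s by ring] at this
    exact this
  have hred : ∀ s t, φ s p₁ ≠ φ t p₂ → W (φ s p₁) (φ t p₂) = W (φ (s - t) p₁) p₂ := by
    intro s t hne
    have h := diag' (s - t) 0 t (by rw [hφ0]; exact hgood s t hne)
    rw [sub_add_cancel, zero_add, hφ0] at h
    exact h
  -- reflection principle at points of B
  have hrefl : ∀ c' d, φ c' p₁ = p₂ → φ (c' + d) p₁ ≠ p₂ →
      W (φ (c' + d) p₁) p₂ = W (φ (c' - d) p₁) p₂ := by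
    intro c' d hc' hne1
    have hne2 : φ (c' - d) p₁ ≠ p₂ := by
      intro h
      have e : φ d p₁ = p₁ := by
        have h2 := congrArg (φ (d - c')) (h.trans hc'.symm)
        rw [← hφadd, ← hφadd, show d - c' + (c' - d) = 0 by ring,
          show d - c' + c' = d by ring, hφ0] at h2
        exact h2.symm
      exact hne1 (by rw [hφadd, e, hc'])
    have e3 : φ (-d) p₂ = φ (c' - d) p₁ := by
      rw [← hc', ← hφadd, show -d + c' = c' - d by ring]
    have hcond : φ c' p₁ ≠ φ (-d) p₂ := by
      rw [hc', e3]
      exact fun hh => hne2 hh.symm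
    have h := diag' c' (-d) d hcond
    rw [neg_add_cancel, hφ0] at h
    calc W (φ (c' + d) p₁) p₂ = W (φ c' p₁) (φ (-d) p₂) := h
      _ = W p₂ (φ (c' - d) p₁) := by rw [hc', e3]
      _ = W (φ (c' - d) p₁) p₂ := (hWsym _ _ (notS2 _ hne2)).symm
  -- constancy on good intervals
  have hIcc : ∀ x y, x ≤ y → (∀ c ∈ Icc x y, φ c p₁ ≠ p₂) →
      W (φ x p₁) p₂ = W (φ y p₁) p₂ := by
    intro x y hxy hgoodI
    have hgc : Continuous fun c : ℝ => (φ c p₁, p₂) :=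
      (hflow p₁).prodMk continuous_const
    exact aux_const S hScl W hWc _ hgc hxy (fun c hc => notS2 c (hgoodI c hc))
  -- main constancy claim
  have hconst : ∀ x y, φ x p₁ ≠ p₂ → φ y p₁ ≠ p₂ →
      W (φ x p₁) p₂ = W (φ y p₁) p₂ := by
    intro x y hx hy
    by_cases hB : ∃ c₀, φ c₀ p₁ = p₂
    swap
    · push_neg at hB
      rcases le_total x y with h | h
      · exact hIcc x y h (fun c _ => hB c)
      · exact (hIcc y x h (fun c _ => hB c)).symm
    obtain ⟨c₀, hc₀⟩ := hB
    set Pgrp : AddSubgroup ℝ :=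
      { carrier := {σ | φ σ p₁ = p₁}
        zero_mem' := hφ0 p₁
        add_mem' := by
          intro u v hu hv
          simp only [mem_setOf_eq] at *
          rw [hφadd, hv, hu]
        neg_mem' := by
          intro u hu
          simp only [mem_setOf_eq] at *
          have : φ (-u) (φ u p₁) = p₁ := by rw [← hφadd, neg_add_cancel, hφ0]
          rwa [hu] at this } with hPdef
    rcases AddSubgroup.dense_or_cyclic Pgrp with hdense | ⟨a₀, ha₀⟩
    · exfalso
      have hclosed : IsClosed (Pgrp : Set ℝ) :=
        isClosed_singleton.preimage (hflow p₁)
      have huniv : (Pgrp : Set ℝ) = univ := by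
        rw [← hclosed.closure_eq, hdense.closure_eq]
      have hall : ∀ σ : ℝ, φ σ p₁ = p₁ := by
        intro σ
        have : σ ∈ (Pgrp : Set ℝ) := by rw [huniv]; trivial
        exact this
      exact hx (by rw [hall x, ← hall c₀, hc₀])
    · have hmemiff : ∀ σ, φ σ p₁ = p₁ ↔ ∃ n : ℤ, σ = (n : ℝ) * a₀ := by
        intro σ
        constructor
        · intro h
          have hm : σ ∈ Pgrp := h
          rw [ha₀] at hm
          obtain ⟨n, hn⟩ := AddSubgroup.mem_closure_singleton.1 hm
          exact ⟨n, by rw [← hn, zsmul_eq_mul]⟩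
        · rintro ⟨n, rfl⟩
          have : (n : ℝ) * a₀ ∈ Pgrp := by
            rw [ha₀]
            exact AddSubgroup.mem_closure_singleton.2 ⟨n, by rw [zsmul_eq_mul]⟩
          exact this
      have ha₀ne : a₀ ≠ 0 := by
        intro h
        obtain ⟨n, hn⟩ := (hmemiff T₁).1 hper₁
        rw [h, mul_zero] at hn
        linarith
      set a := |a₀| with hadef
      have ha : 0 < a := abs_pos.2 ha₀ne
      have hmemA : ∀ σ, φ σ p₁ = p₁ ↔ ∃ n : ℤ, σ = (n : ℝ) * a := by
        intro σ
        rw [hmemiff σ]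
        rcases abs_cases a₀ with ⟨h1, _⟩ | ⟨h1, _⟩
        · rw [hadef, h1]
        · rw [hadef, h1]
          constructor
          · rintro ⟨n, rfl⟩; exact ⟨-n, by push_cast; ring⟩
          · rintro ⟨n, rfl⟩; exact ⟨-n, by push_cast; ring⟩
      have badiff : ∀ c, φ c p₁ = p₂ ↔ ∃ n : ℤ, c = c₀ + (n : ℝ) * a := by
        intro c
        constructor
        · intro h
          have h2 := congrArg (φ (-c₀)) (h.trans hc₀.symm)
          rw [← hφadd, ← hφadd, show -c₀ + c = c - c₀ by ring, neg_add_cancel, hφ0] at h2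
          obtain ⟨n, hn⟩ := (hmemA _).1 h2
          exact ⟨n, by linarith⟩
        · rintro ⟨n, rfl⟩
          have h3 : φ ((n : ℝ) * a) p₁ = p₁ := (hmemA _).2 ⟨n, rfl⟩
          rw [hφadd, h3, hc₀]
      set v : ℤ → ℤ := fun k => W (φ (c₀ + (k : ℝ) * a + a / 2) p₁) p₂ with hvdef
      have hIoo : ∀ (k : ℤ) (c : ℝ), c₀ + (k : ℝ) * a < c → c < c₀ + ((k : ℝ) + 1) * a →
          φ c p₁ ≠ p₂ := by
        intro k c h1 h2 h
        obtain ⟨n, hn⟩ := (badiff c).1 h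
        rw [hn] at h1 h2
        have hk1 : (k : ℝ) < (n : ℝ) := by
          have h3 : (k : ℝ) * a < (n : ℝ) * a := by linarith
          exact lt_of_mul_lt_mul_right h3 ha.le
        have hk2 : (n : ℝ) < (k : ℝ) + 1 := by
          have h3 : (n : ℝ) * a < ((k : ℝ) + 1) * a := by linarith
          exact lt_of_mul_lt_mul_right h3 ha.le
        have hk1' : k < n := by exact_mod_cast hk1
        have hk2' : (n : ℝ) < ((k + 1 : ℤ) : ℝ) := by push_cast; linarith
        have hk2'' : n < k + 1 := by exact_mod_cast hk2'
        omega
      have hval : ∀ (k : ℤ) (c : ℝ), c₀ + (k : ℝ) * a < c → c < c₀ + ((k : ℝ) + 1) * a →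
          W (φ c p₁) p₂ = v k := by
        intro k c h1 h2
        show W (φ c p₁) p₂ = W (φ (c₀ + (k : ℝ) * a + a / 2) p₁) p₂
        set m := c₀ + (k : ℝ) * a + a / 2 with hmdef
        have hm1 : c₀ + (k : ℝ) * a < m := by rw [hmdef]; linarith
        have hm2 : m < c₀ + ((k : ℝ) + 1) * a := by rw [hmdef]; linarith
        clear_value m
        rcases le_total c m with h | h
        · exact hIcc c m h (fun τ hτ => hIoo k τ (by have := hτ.1; linarith)
            (by have := hτ.2; linarith))
        · exact (hIcc m c h (fun τ hτ => hIoo k τ (by have := hτ.1; linarith)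
            (by have := hτ.2; linarith))).symm
      have hstep : ∀ k : ℤ, W (φ (c₀ + ((k : ℝ) + 1) * a + a / 2) p₁) p₂
          = W (φ (c₀ + (k : ℝ) * a + a / 2) p₁) p₂ := by
        intro k
        have hbad : φ (c₀ + ((k : ℝ) + 1) * a) p₁ = p₂ :=
          (badiff _).2 ⟨k + 1, by push_cast; ring⟩
        have hgd : φ (c₀ + ((k : ℝ) + 1) * a + a / 2) p₁ ≠ p₂ :=
          hIoo (k + 1) _ (by push_cast; linarith) (by push_cast; linarith)
        have h := hrefl (c₀ + ((k : ℝ) + 1) * a) (a / 2) hbad hgd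
        rw [h, show c₀ + ((k : ℝ) + 1) * a - a / 2 = c₀ + (k : ℝ) * a + a / 2 by ring]
      have hstepv : ∀ k : ℤ, v (k + 1) = v k := by
        intro k
        show W (φ (c₀ + ((k + 1 : ℤ) : ℝ) * a + a / 2) p₁) p₂
          = W (φ (c₀ + (k : ℝ) * a + a / 2) p₁) p₂
        rw [show ((k + 1 : ℤ) : ℝ) = (k : ℝ) + 1 by push_cast; ring]
        exact hstep k
      have hvconst : ∀ k : ℤ, v k = v 0 := by
        intro k
        induction k using Int.induction_on with
        | zero => rfl
        | succ k ih => rw [hstepv k, ih]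
        | pred k ih =>
            have h := hstepv (-(k : ℤ) - 1)
            rw [show -(k : ℤ) - 1 + 1 = -(k : ℤ) by ring] at h
            rw [← h]; exact ih
      have hfloor : ∀ x : ℝ, φ x p₁ ≠ p₂ →
          ∃ k : ℤ, c₀ + (k : ℝ) * a < x ∧ x < c₀ + ((k : ℝ) + 1) * a := by
        intro x hx
        refine ⟨⌊(x - c₀) / a⌋, ?_, ?_⟩
        · have h1 : (⌊(x - c₀) / a⌋ : ℝ) ≤ (x - c₀) / a := Int.floor_le _
          have h1' : (⌊(x - c₀) / a⌋ : ℝ) * a ≤ x - c₀ := by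
            rw [← le_div_iff₀ ha]; exact h1
          rcases lt_or_eq_of_le h1' with h | h
          · linarith
          · exact absurd ((badiff x).2 ⟨⌊(x - c₀) / a⌋, by linarith⟩) hx
        · have h2 : (x - c₀) / a < (⌊(x - c₀) / a⌋ : ℝ) + 1 := Int.lt_floor_add_one _
          have h2' : x - c₀ < ((⌊(x - c₀) / a⌋ : ℝ) + 1) * a := by
            rw [← div_lt_iff₀ ha]; exact h2
          linarith
      obtain ⟨kx, hkx1, hkx2⟩ := hfloor x hx
      obtain ⟨ky, hky1, hky2⟩ := hfloor y hy
      rw [hval kx x hkx1 hkx2, hval ky y hky1 hky2, hvconst kx, hvconst ky]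
  refine ⟨W (φ cstar p₁) p₂, ?_⟩
  rintro q₁ ⟨s, rfl⟩ q₂ ⟨t, rfl⟩ hne
  refine ⟨notS' s t hne, ?_⟩
  rw [hred s t hne]
  exact hconst (s - t) cstar (hgood s t hne) hcstar
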